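/- The multi-channel correlation operator A : x = (ξ_1,…,ξ_C) ↦ (Σ_c α_{1c} ⋆ ξ_c, …, Σ_c α_{Mc} ⋆ ξ_c) is an isometry (⟨Ax, Ax'⟩ = ⟨x, x'⟩ for all x, x') if and only if Σ_{m=1}^M α_{mc} ⋆ α_{mc'} equals the Kronecker delta function δ (value 1 at (0,0), 0 elsewhere) when c = c' and equals 0 when c ≠ c'. -/

import Mathlib

/-- 2D convolution: (α * ξ)[i,j] = Σ_{p,q} α[p,q]·ξ[i-p, j-q]. -/
noncomputable def conv (α ξ : ℤ × ℤ → ℝ) : ℤ × ℤ → ℝ :=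
  fun z => ∑ᶠ p : ℤ × ℤ, α p * ξ (z.1 - p.1, z.2 - p.2)

/-- 2D correlation: (α ⋆ ξ)[i,j] = Σ_{p,q} α[p,q]·ξ[i+p, j+q]. -/
noncomputable def corr (α ξ : ℤ × ℤ → ℝ) : ℤ × ℤ → ℝ :=
  fun z => ∑ᶠ p : ℤ × ℤ, α p * ξ (z.1 + p.1, z.2 + p.2)

/-- ℓ² inner product of 2D signals. -/
noncomputable def ip (f g : ℤ × ℤ → ℝ) : ℝ := ∑ᶠ z : ℤ × ℤ, f z * g z

/-- Kronecker delta on ℤ×ℤ. -/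
def kdelta : ℤ × ℤ → ℝ := fun z => if z = (0, 0) then 1 else 0

open Function

lemma corr_apply (a x : ℤ × ℤ → ℝ) (z : ℤ × ℤ) :
    corr a x z = ∑ᶠ p : ℤ × ℤ, a p * x (z + p) := rfl

lemma fin_mul_left {a : ℤ × ℤ → ℝ} (ha : (support a).Finite) (h : ℤ × ℤ → ℝ) :
    (support fun p => a p * h p).Finite :=
  ha.subset (Function.support_mul_subset_left _ _)

lemma corr_support {a x : ℤ × ℤ → ℝ} (ha : (support a).Finite) (hx : (support x).Finite) :
    (support (corr a x)).Finite := by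
  apply ((hx.prod ha).image (fun u : (ℤ × ℤ) × (ℤ × ℤ) => u.1 - u.2)).subset
  intro z hz
  rw [Function.mem_support] at hz
  have hex : ∃ p, a p * x (z + p) ≠ 0 := by
    by_contra hco
    push_neg at hco
    apply hz
    rw [corr_apply, finsum_congr hco, finsum_zero]
  obtain ⟨p, hp⟩ := hex
  rcases mul_ne_zero_iff.mp hp with ⟨h1, h2⟩
  exact ⟨(z + p, p), ⟨h2, h1⟩, by simp⟩

lemma dirac_support (u : ℤ × ℤ) :
    (support fun v : ℤ × ℤ => if v = u then (1 : ℝ) else 0).Finite :=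
  (Set.finite_singleton u).subset (by
    intro v hv
    rw [Function.mem_support] at hv
    by_contra h0
    exact hv (if_neg h0))

/-- The core identity: ip of two correlations equals correlation of kernels paired
with shifted inner products. -/
lemma ip_corr_corr (a b x y : ℤ × ℤ → ℝ) (ha : (support a).Finite) (hb : (support b).Finite)
    (hx : (support x).Finite) (hy : (support y).Finite) :
    ip (corr a x) (corr b y)
      = ∑ᶠ d : ℤ × ℤ, corr a b d * ∑ᶠ v : ℤ × ℤ, x v * y (v + d) := by
  set F : (ℤ × ℤ) × (ℤ × ℤ) × (ℤ × ℤ) → ℝ :=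
    fun w => a w.2.1 * x (w.1 + w.2.1) * (b w.2.2 * y (w.1 + w.2.2)) with hFdef
  have hF : (support F).Finite := by
    apply (((hx.prod ha).image (fun u : (ℤ × ℤ) × (ℤ × ℤ) => u.1 - u.2)).prod
      (ha.prod hb)).subset
    rintro ⟨z, p, q⟩ hw
    rw [Function.mem_support, hFdef] at hw
    simp only [ne_eq, mul_eq_zero, not_or] at hw
    obtain ⟨⟨hap, hxp⟩, hbq, _⟩ := hw
    exact ⟨⟨(z + p, p), ⟨hxp, hap⟩, by simp⟩, hap, hbq⟩
  -- the reindexing equivalence (d, p, v) ↦ (v - p, p, d + p)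
  set e : (ℤ × ℤ) × (ℤ × ℤ) × (ℤ × ℤ) ≃ (ℤ × ℤ) × (ℤ × ℤ) × (ℤ × ℤ) :=
    { toFun := fun w => (w.2.2 - w.2.1, w.2.1, w.1 + w.2.1)
      invFun := fun w => (w.2.2 - w.2.1, w.2.1, w.1 + w.2.1)
      left_inv := by rintro ⟨d, p, v⟩; simp
      right_inv := by rintro ⟨z, p, q⟩; simp } with hedef
  have hFe : (support fun w => F (e w)).Finite := by
    have : (support fun w => F (e w)) = e ⁻¹' support F := rfl
    rw [this]
    exact hF.preimage (e.injective.injOn)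
  have step1 : ip (corr a x) (corr b y) = ∑ᶠ w, F w := by
    rw [ip, finsum_curry₃ F hF]
    apply finsum_congr
    intro z
    rw [corr_apply, corr_apply,
      finsum_mul _ _]
    apply finsum_congr
    intro p
    rw [mul_finsum _ _]
  have step2 : ∑ᶠ w, F w = ∑ᶠ w, F (e w) := (finsum_comp_equiv e).symm
  rw [step1, step2, finsum_curry₃ _ hFe]
  apply finsum_congr
  intro d
  rw [corr_apply, finsum_mul _ _]
  apply finsum_congr
  intro p
  rw [mul_finsum _ _]
  apply finsum_congr
  intro v
  have h1 : v - p + p = v := by abel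
  have h2 : v - p + (d + p) = v + d := by abel
  simp only [hFdef, hedef, Equiv.coe_fn_mk, h1, h2]
  ring

lemma ip_sum_sum {n : ℕ} (f g : Fin n → ℤ × ℤ → ℝ)
    (hf : ∀ c, (support (f c)).Finite) (hg : ∀ c, (support (g c)).Finite) :
    ip (fun z => ∑ c, f c z) (fun z => ∑ c, g c z) = ∑ c, ∑ c', ip (f c) (g c') := by
  rw [ip]
  have h1 : ∀ z : ℤ × ℤ, (∑ c, f c z) * (∑ c', g c' z) = ∑ c, ∑ c', f c z * g c' z := by
    intro z; rw [Finset.sum_mul_sum]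
  rw [finsum_congr h1, finsum_sum_comm _ _
    (fun c _ => (hf c).subset (by
      intro z hz
      rw [Function.mem_support] at hz
      by_contra h0
      exact hz (by simp [Function.notMem_support.mp h0]))) ]
  apply Finset.sum_congr rfl
  intro c _
  rw [finsum_sum_comm _ _ (fun c' _ => (hf c).subset (Function.support_mul_subset_left _ _))]
  rfl

theorem isometry_iff_orthogonal_kernel (C M : ℕ) (α : Fin M → Fin C → ℤ × ℤ → ℝ)
    (hα : ∀ m c, (Function.support (α m c)).Finite) :
    (∀ x x' : Fin C → ℤ × ℤ → ℝ,
      (∀ c, (Function.support (x c)).Finite) → (∀ c, (Function.support (x' c)).Finite) →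
      ∑ m : Fin M, ip (fun z => ∑ c : Fin C, corr (α m c) (x c) z)
          (fun z => ∑ c : Fin C, corr (α m c) (x' c) z)
        = ∑ c : Fin C, ip (x c) (x' c))
    ↔ (∀ c c' : Fin C,
        (fun z => ∑ m : Fin M, corr (α m c) (α m c') z)
          = if c = c' then kdelta else 0) := by
  -- key rewriting of the LHS of the isometry property
  have key : ∀ x x' : Fin C → ℤ × ℤ → ℝ,
      (∀ c, (support (x c)).Finite) → (∀ c, (support (x' c)).Finite) →
      ∑ m : Fin M, ip (fun z => ∑ c : Fin C, corr (α m c) (x c) z)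
          (fun z => ∑ c : Fin C, corr (α m c) (x' c) z)
        = ∑ c : Fin C, ∑ c' : Fin C, ∑ᶠ d : ℤ × ℤ,
            (∑ m : Fin M, corr (α m c) (α m c') d) * ∑ᶠ v : ℤ × ℤ, x c v * x' c' (v + d) := by
    intro x x' hx hx'
    have e1 : ∀ m : Fin M,
        ip (fun z => ∑ c : Fin C, corr (α m c) (x c) z)
          (fun z => ∑ c : Fin C, corr (α m c) (x' c) z)
        = ∑ c : Fin C, ∑ c' : Fin C, ∑ᶠ d : ℤ × ℤ,
            corr (α m c) (α m c') d * ∑ᶠ v : ℤ × ℤ, x c v * x' c' (v + d) := by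
      intro m
      rw [ip_sum_sum _ _ (fun c => corr_support (hα m c) (hx c))
        (fun c => corr_support (hα m c) (hx' c))]
      exact Finset.sum_congr rfl fun c _ => Finset.sum_congr rfl fun c' _ =>
        ip_corr_corr _ _ _ _ (hα m c) (hα m c') (hx c) (hx' c')
    rw [Finset.sum_congr rfl fun m _ => e1 m, Finset.sum_comm]
    apply Finset.sum_congr rfl
    intro c _
    rw [Finset.sum_comm]
    apply Finset.sum_congr rfl
    intro c' _
    rw [sum_finsum_comm _ _ (fun m _ =>
      (corr_support (hα m c) (hα m c')).subset (Function.support_mul_subset_left _ _))]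
    exact finsum_congr fun d => (Finset.sum_mul _ _ _).symm
  constructor
  · -- isometry → orthogonality
    intro h c c'
    funext w
    -- test signals: delta at 0 in channel c, delta at w in channel c'
    set xd : Fin C → ℤ × ℤ → ℝ :=
      fun c2 => if c2 = c then (fun v => if v = 0 then 1 else 0) else 0 with hxd
    set xd' : Fin C → ℤ × ℤ → ℝ :=
      fun c2 => if c2 = c' then (fun v => if v = w then 1 else 0) else 0 with hxd'
    have hfx : ∀ c2, (support (xd c2)).Finite := by
      intro c2
      have hr : xd c2 = if c2 = c then (fun v : ℤ × ℤ => if v = 0 then (1:ℝ) else 0) else 0 := rfl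
      rw [hr]
      rcases eq_or_ne c2 c with h2 | h2
      · rw [if_pos h2]; exact dirac_support 0
      · rw [if_neg h2]; simp
    have hfx' : ∀ c2, (support (xd' c2)).Finite := by
      intro c2
      have hr : xd' c2 = if c2 = c' then (fun v : ℤ × ℤ => if v = w then (1:ℝ) else 0) else 0 := rfl
      rw [hr]
      rcases eq_or_ne c2 c' with h2 | h2
      · rw [if_pos h2]; exact dirac_support w
      · rw [if_neg h2]; simp
    have heq := h xd xd' hfx hfx'
    rw [key xd xd' hfx hfx'] at heq
    -- compute the LHS of heq
    have hS : ∀ d : ℤ × ℤ, (∑ᶠ v : ℤ × ℤ, xd c v * xd' c' (v + d))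
        = if d = w then 1 else 0 := by
      intro d
      rw [finsum_eq_single _ (0 : ℤ × ℤ) (fun v hv => by simp [hxd, hv])]
      simp [hxd, hxd']
    have hLHS : (∑ c2 : Fin C, ∑ c2' : Fin C, ∑ᶠ d : ℤ × ℤ,
        (∑ m : Fin M, corr (α m c2) (α m c2') d) * ∑ᶠ v : ℤ × ℤ, xd c2 v * xd' c2' (v + d))
        = ∑ m : Fin M, corr (α m c) (α m c') w := by
      rw [Finset.sum_eq_single_of_mem c (Finset.mem_univ c) (by
        intro c2 _ hne
        apply Finset.sum_eq_zero
        intro c2' _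
        have : ∀ d : ℤ × ℤ, (∑ᶠ v : ℤ × ℤ, xd c2 v * xd' c2' (v + d)) = 0 := by
          intro d
          have : ∀ v : ℤ × ℤ, xd c2 v * xd' c2' (v + d) = 0 := by
            intro v; simp [hxd, hne]
          rw [finsum_congr this, finsum_zero]
        simp only [this, mul_zero]
        exact finsum_zero)]
      rw [Finset.sum_eq_single_of_mem c' (Finset.mem_univ c') (by
        intro c2' _ hne
        have : ∀ d : ℤ × ℤ, (∑ᶠ v : ℤ × ℤ, xd c v * xd' c2' (v + d)) = 0 := by
          intro d
          have : ∀ v : ℤ × ℤ, xd c v * xd' c2' (v + d) = 0 := by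
            intro v; simp [hxd', hne]
          rw [finsum_congr this, finsum_zero]
        simp only [this, mul_zero]
        exact finsum_zero)]
      simp only [hS]
      rw [finsum_eq_single _ w (fun d hd => by simp [hd])]
      simp
    -- compute the RHS of heq
    have hRHS : (∑ c2 : Fin C, ip (xd c2) (xd' c2))
        = if c = c' then (if w = 0 then (1 : ℝ) else 0) else 0 := by
      rw [Finset.sum_eq_single_of_mem c (Finset.mem_univ c) (by
        intro c2 _ hne
        have : ∀ z : ℤ × ℤ, xd c2 z * xd' c2 z = 0 := by intro z; simp [hxd, hne]
        rw [ip, finsum_congr this, finsum_zero])]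
      by_cases hc : c = c'
      · subst hc
        simp only [hxd, hxd', if_pos rfl, if_pos rfl, ip]
        rw [finsum_eq_single _ (0 : ℤ × ℤ) (fun v hv => by simp [hv])]
        simp [eq_comm]
      · have : ∀ z : ℤ × ℤ, xd c z * xd' c z = 0 := by
          intro z; simp [hxd', hc]
        rw [ip, finsum_congr this, finsum_zero, if_neg hc]
    rw [hLHS, hRHS] at heq
    rw [heq]
    by_cases hc : c = c' <;> simp [hc, kdelta, Prod.ext_iff]
  · -- orthogonality → isometry
    intro h x x' hx hx'
    rw [key x x' hx hx']
    have hterm : ∀ c c' : Fin C, (∑ᶠ d : ℤ × ℤ,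
        (∑ m : Fin M, corr (α m c) (α m c') d) * ∑ᶠ v : ℤ × ℤ, x c v * x' c' (v + d))
        = if c = c' then ip (x c) (x' c') else 0 := by
      intro c c'
      by_cases hc : c = c'
      · subst hc
        have hcc0 := h c c
        rw [if_pos rfl] at hcc0
        have hcc := congrFun hcc0
        rw [if_pos rfl]
        have h1 : ∀ d : ℤ × ℤ,
            (∑ m : Fin M, corr (α m c) (α m c) d) * (∑ᶠ v : ℤ × ℤ, x c v * x' c (v + d))
            = kdelta d * ∑ᶠ v : ℤ × ℤ, x c v * x' c (v + d) := by
          intro d; rw [hcc d]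
        rw [finsum_congr h1, finsum_eq_single _ (0 : ℤ × ℤ)
          (fun d hd => by rw [show kdelta d = 0 from if_neg hd, zero_mul])]
        simp [kdelta, ip, Prod.ext_iff]
      · have hcc0 := h c c'
        rw [if_neg hc] at hcc0
        have hcc := congrFun hcc0
        rw [if_neg hc]
        have h1 : ∀ d : ℤ × ℤ,
            (∑ m : Fin M, corr (α m c) (α m c') d) * (∑ᶠ v : ℤ × ℤ, x c v * x' c' (v + d))
            = 0 := by
          intro d; rw [hcc d]; simp
        rw [finsum_congr h1, finsum_zero]
    rw [Finset.sum_congr rfl fun c _ => Finset.sum_congr rfl fun c' _ => hterm c c']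
    simp
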